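/- If the function c : X×A → ℝ ∪ {+∞} is bounded from below by a constant K and K-inf-compact on X×A, then the function c̄ : P(X)×A → ℝ ∪ {+∞}, defined by c̄(z,a) = ∫_X c(x,a) z(dx), is bounded from below by the same constant K and is K-inf-compact on P(X)×A. -/

import Mathlib

open MeasureTheory Filter Topology
open scoped ENNReal NNReal

/-- The nonnegative part of an extended real number, as an element of `[0,∞]`. -/
noncomputable def erealPart (x : EReal) : ℝ≥0∞ :=
  if x = ⊤ then ⊤ else ENNReal.ofReal x.toReal

/-- The Lebesgue integral of an `ℝ ∪ {±∞}`-valued function `f`, defined as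
`∫ f⁺ − ∫ f⁻` (the standard definition; for functions bounded below by a real constant
the negative part is integrable, so this is the usual integral with values in `ℝ ∪ {+∞}`). -/
noncomputable def eIntegral {S : Type*} [MeasurableSpace S] (μ : Measure S)
    (f : S → EReal) : EReal :=
  ((∫⁻ s, erealPart (f s) ∂μ : ℝ≥0∞) : EReal) - ((∫⁻ s, erealPart (-f s) ∂μ : ℝ≥0∞) : EReal)

/-- The one-step cost `c̄(z,a) = ∫_X c(x,a) z(dx)` of the COMDP. -/
noncomputable def cbar {X A : Type*} [MeasurableSpace X]
    (c : X × A → EReal) (z : ProbabilityMeasure X) (a : A) : EReal :=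
  eIntegral (z : Measure X) fun x => c (x, a)

/-- A function `f : X × A → ℝ ∪ {+∞}` is `K`-inf-compact if for every compact `K ⊆ X`
its restriction to `K × A` is inf-compact, i.e. all level sets are compact. -/
def KInfCompact {X A : Type*} [TopologicalSpace X] [TopologicalSpace A]
    (f : X × A → EReal) : Prop :=
  ∀ K : Set X, IsCompact K → ∀ lam : ℝ,
    IsCompact {p : X × A | p.1 ∈ K ∧ f p ≤ (lam : EReal)}

section Aux

lemma erealPart_top : erealPart ⊤ = ⊤ := if_pos rfl

lemma erealPart_coe (x : ℝ) : erealPart (x : EReal) = ENNReal.ofReal x := by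
  rw [erealPart, if_neg (EReal.coe_ne_top x), EReal.toReal_coe]

lemma erealPart_bot : erealPart ⊥ = 0 := by
  rw [erealPart, if_neg bot_ne_top]
  simp

lemma coe_ennreal_eq_coe_toReal {x : ℝ≥0∞} (hx : x ≠ ⊤) :
    (x : EReal) = ((x.toReal : ℝ) : EReal) := by
  conv_lhs => rw [← ENNReal.ofReal_toReal hx]
  rw [EReal.coe_ennreal_ofReal, max_eq_left ENNReal.toReal_nonneg]

lemma erealPart_add_const (K : ℝ) (t : ℝ≥0∞) :
    erealPart ((K : EReal) + t) = (t + ENNReal.ofReal K) - ENNReal.ofReal (-K) := by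
  rcases eq_or_ne t ⊤ with rfl | ht
  · rw [EReal.coe_ennreal_top, EReal.coe_add_top, erealPart_top]
    rw [top_add, ENNReal.top_sub ENNReal.ofReal_ne_top]
  · rw [coe_ennreal_eq_coe_toReal ht, ← EReal.coe_add, erealPart_coe]
    set r := t.toReal with hr
    have hr0 : 0 ≤ r := ENNReal.toReal_nonneg
    have htr : t = ENNReal.ofReal r := (ENNReal.ofReal_toReal ht).symm
    rcases le_or_gt 0 K with hK | hK
    · rw [ENNReal.ofReal_eq_zero.2 (by linarith : -K ≤ 0), tsub_zero, htr,
        ← ENNReal.ofReal_add hr0 hK]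
      ring_nf
    · rw [ENNReal.ofReal_eq_zero.2 (le_of_lt hK), add_zero, htr,
        ← ENNReal.ofReal_sub r (by linarith : (0:ℝ) ≤ -K)]
      ring_nf

lemma erealPart_neg_add_const (K : ℝ) (t : ℝ≥0∞) :
    erealPart (-((K : EReal) + t)) = ENNReal.ofReal (-K) - t := by
  rcases eq_or_ne t ⊤ with rfl | ht
  · rw [EReal.coe_ennreal_top, EReal.coe_add_top]
    simp [erealPart_bot, ENNReal.sub_top]
  · rw [coe_ennreal_eq_coe_toReal ht, ← EReal.coe_add, ← EReal.coe_neg, erealPart_coe]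
    set r := t.toReal with hr
    have hr0 : 0 ≤ r := ENNReal.toReal_nonneg
    have htr : t = ENNReal.ofReal r := (ENNReal.ofReal_toReal ht).symm
    rw [htr, ← ENNReal.ofReal_sub (-K) hr0]
    ring_nf

lemma eIntegral_const_add {S : Type*} [MeasurableSpace S] (μ : Measure S)
    [IsProbabilityMeasure μ] (K : ℝ) (h : S → ℝ≥0∞) (hm : Measurable h) :
    eIntegral μ (fun s => (K : EReal) + (h s : EReal))
      = (K : EReal) + ((∫⁻ s, h s ∂μ : ℝ≥0∞) : EReal) := by
  set a := ENNReal.ofReal K with ha_def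
  set b := ENNReal.ofReal (-K) with hb_def
  have ha : a ≠ ⊤ := ENNReal.ofReal_ne_top
  have hb : b ≠ ⊤ := ENNReal.ofReal_ne_top
  have habz : a = 0 ∨ b = 0 := by
    rcases le_or_gt 0 K with hK | hK
    · exact Or.inr (ENNReal.ofReal_eq_zero.2 (by linarith))
    · exact Or.inl (ENNReal.ofReal_eq_zero.2 (le_of_lt hK))
  set I := ∫⁻ s, h s ∂μ with hI_def
  set P := ∫⁻ s, (h s + a) - b ∂μ with hP_def
  set N := ∫⁻ s, b - h s ∂μ with hN_def
  have posInt : ∫⁻ s, erealPart ((K : EReal) + h s) ∂μ = P :=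
    lintegral_congr fun s => erealPart_add_const K (h s)
  have negInt : ∫⁻ s, erealPart (-((K : EReal) + h s)) ∂μ = N :=
    lintegral_congr fun s => erealPart_neg_add_const K (h s)
  have hNle : N ≤ b := by
    calc N ≤ ∫⁻ _, b ∂μ := lintegral_mono fun s => tsub_le_self
    _ = b := by simp [lintegral_const]
  have hN : N ≠ ⊤ := (lt_of_le_of_lt hNle (lt_top_iff_ne_top.2 hb)).ne
  have hconst : ∀ c : ℝ≥0∞, ∫⁻ _, c ∂μ = c := fun c => by simp
  have key : P + b = N + I + a := by
    have e1 : P + b = ∫⁻ s, max (h s + a) b ∂μ := by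
      calc P + b = ∫⁻ s, ((h s + a) - b) + b ∂μ := by
            rw [lintegral_add_right _ measurable_const, hconst]
        _ = ∫⁻ s, max (h s + a) b ∂μ := lintegral_congr fun s => tsub_add_eq_max
    have e2 : ∫⁻ s, max (h s + a) b ∂μ = ∫⁻ s, max b (h s) ∂μ + a := by
      calc ∫⁻ s, max (h s + a) b ∂μ = ∫⁻ s, max b (h s) + a ∂μ := by
            apply lintegral_congr fun s => ?_
            rcases habz with h0 | h0
            · rw [h0, add_zero, add_zero, max_comm]
            · rw [h0, max_eq_left zero_le, max_eq_right zero_le]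
        _ = ∫⁻ s, max b (h s) ∂μ + a := by
            rw [lintegral_add_right _ measurable_const, hconst]
    have e3 : ∫⁻ s, max b (h s) ∂μ = N + I := by
      calc ∫⁻ s, max b (h s) ∂μ = ∫⁻ s, (b - h s) + h s ∂μ :=
            lintegral_congr fun s => tsub_add_eq_max.symm
        _ = N + I := by rw [lintegral_add_right _ hm]
    rw [e1, e2, e3]
  rw [eIntegral, posInt, negInt]
  rcases eq_or_ne I ⊤ with hI | hI
  · have hP : P = ⊤ := by
      by_contra hP
      have hne : P + b ≠ ⊤ := ENNReal.add_ne_top.2 ⟨hP, hb⟩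
      rw [key, hI] at hne
      simp [ENNReal.add_eq_top, hN] at hne
    rw [hP, hI, coe_ennreal_eq_coe_toReal hN, EReal.coe_ennreal_top, EReal.top_sub_coe,
      EReal.coe_add_top]
  · have hP : P ≠ ⊤ := by
      intro hP
      have : P + b = ⊤ := by rw [hP]; simp
      rw [key] at this
      exact (ENNReal.add_ne_top.2 ⟨ENNReal.add_ne_top.2 ⟨hN, hI⟩, ha⟩) this
    have treal : P.toReal + b.toReal = N.toReal + I.toReal + a.toReal := by
      rw [← ENNReal.toReal_add hP hb, ← ENNReal.toReal_add hN hI,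
        ← ENNReal.toReal_add (ENNReal.add_ne_top.2 ⟨hN, hI⟩) ha, key]
    have hab : a.toReal - b.toReal = K := by
      rcases le_or_gt 0 K with hK | hK
      · rw [ha_def, hb_def, ENNReal.toReal_ofReal hK,
          ENNReal.ofReal_eq_zero.2 (by linarith : -K ≤ 0)]
        simp
      · rw [ha_def, hb_def, ENNReal.ofReal_eq_zero.2 hK.le,
          ENNReal.toReal_ofReal (by linarith : (0:ℝ) ≤ -K)]
        simp
    rw [coe_ennreal_eq_coe_toReal hP, coe_ennreal_eq_coe_toReal hN, coe_ennreal_eq_coe_toReal hI,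
      ← EReal.coe_sub, ← EReal.coe_add, EReal.coe_eq_coe_iff]
    linarith

end Aux

section Aux2

open scoped ProbabilityTheory

lemma EReal.exists_coe {x : EReal} (h1 : x ≠ ⊥) (h2 : x ≠ ⊤) : ∃ r : ℝ, x = (r : EReal) := by
  induction x using EReal.rec with
  | bot => exact absurd rfl h1
  | coe r => exact ⟨r, rfl⟩
  | top => exact absurd rfl h2

lemma erealPart_mono : Monotone erealPart := by
  intro u v huv
  rcases eq_or_ne v ⊤ with rfl | hv
  · rw [erealPart_top]; exact le_top
  · have hu : u ≠ ⊤ := fun h => hv (top_le_iff.1 (h ▸ huv))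
    rcases eq_or_ne u ⊥ with rfl | hu'
    · rw [erealPart_bot]; exact zero_le
    · rw [erealPart, if_neg hu, erealPart, if_neg hv]
      exact ENNReal.ofReal_le_ofReal (EReal.toReal_le_toReal huv hu' hv)

noncomputable def gfun {X A : Type*} (c : X × A → EReal) (K : ℝ) (p : X × A) : ℝ≥0∞ :=
  erealPart (c p - (K : EReal))

lemma gfun_measurable {X A : Type*} [MeasurableSpace X] [MeasurableSpace A]
    {c : X × A → EReal} (hc : Measurable c) (K : ℝ) : Measurable (gfun c K) := by
  have hφ : Monotone (fun x : EReal => erealPart (x - (K : EReal))) := fun x y hxy =>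
    erealPart_mono (EReal.sub_le_sub hxy (le_refl _))
  exact hφ.measurable.comp hc

lemma gfun_eq {X A : Type*} {c : X × A → EReal} {K : ℝ} (hbdd : ∀ p, (K : EReal) ≤ c p)
    (p : X × A) : c p = (K : EReal) + (gfun c K p : EReal) := by
  rcases eq_or_ne (c p) ⊤ with h | h
  · rw [gfun, h, EReal.top_sub_coe, erealPart_top, EReal.coe_ennreal_top, EReal.coe_add_top]
  · have hbot : c p ≠ ⊥ := ((EReal.bot_lt_coe K).trans_le (hbdd p)).ne'
    obtain ⟨x, hx⟩ := EReal.exists_coe hbot h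
    have hKx : K ≤ x := by
      have h' := hbdd p
      rw [hx] at h'
      exact EReal.coe_le_coe_iff.1 h'
    rw [gfun, hx, ← EReal.coe_sub, erealPart_coe, EReal.coe_ennreal_ofReal,
      max_eq_left (by linarith : (0:ℝ) ≤ x - K), ← EReal.coe_add]
    norm_num

lemma gfun_le_iff {X A : Type*} {c : X × A → EReal} {K : ℝ} (hbdd : ∀ p, (K : EReal) ≤ c p)
    (p : X × A) {r : ℝ≥0∞} (hr : r ≠ ⊤) :
    gfun c K p ≤ r ↔ c p ≤ ((K + r.toReal : ℝ) : EReal) := by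
  rcases eq_or_ne (c p) ⊤ with h | h
  · rw [gfun, h, EReal.top_sub_coe, erealPart_top]
    exact iff_of_false (fun hh => hr (top_le_iff.1 hh))
      (fun hh => EReal.coe_ne_top _ (top_le_iff.1 hh))
  · have hbot : c p ≠ ⊥ := ((EReal.bot_lt_coe K).trans_le (hbdd p)).ne'
    obtain ⟨x, hx⟩ := EReal.exists_coe hbot h
    rw [gfun, hx, ← EReal.coe_sub, erealPart_coe, EReal.coe_le_coe_iff,
      ENNReal.ofReal_le_iff_le_toReal hr]
    constructor <;> intro <;> linarith

lemma cbar_eq {X A : Type*} [MeasurableSpace X] [MeasurableSpace A]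
    {c : X × A → EReal} (hc : Measurable c) {K : ℝ} (hbdd : ∀ p, (K : EReal) ≤ c p)
    (z : MeasureTheory.ProbabilityMeasure X) (a : A) :
    cbar c z a = (K : EReal)
      + ((∫⁻ x, gfun c K (x, a) ∂(z : MeasureTheory.Measure X) : ℝ≥0∞) : EReal) := by
  have : (fun x => c (x, a)) = fun x => (K : EReal) + (gfun c K (x, a) : EReal) := by
    funext x; exact gfun_eq hbdd (x, a)
  rw [cbar, this]
  exact eIntegral_const_add _ K (fun x => gfun c K (x, a))
    ((gfun_measurable hc K).comp measurable_prodMk_right)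

lemma cbar_ge {X A : Type*} [MeasurableSpace X] [MeasurableSpace A]
    {c : X × A → EReal} (hc : Measurable c) {K : ℝ} (hbdd : ∀ p, (K : EReal) ≤ c p)
    (z : MeasureTheory.ProbabilityMeasure X) (a : A) : (K : EReal) ≤ cbar c z a := by
  rw [cbar_eq hc hbdd]
  set I := ∫⁻ x, gfun c K (x, a) ∂(z : MeasureTheory.Measure X)
  rcases eq_or_ne I ⊤ with hI | hI
  · rw [hI, EReal.coe_ennreal_top, EReal.coe_add_top]; exact le_top
  · rw [coe_ennreal_eq_coe_toReal hI, ← EReal.coe_add, EReal.coe_le_coe_iff]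
    have := ENNReal.toReal_nonneg (a := I)
    linarith

lemma cbar_le_iff {X A : Type*} [MeasurableSpace X] [MeasurableSpace A]
    {c : X × A → EReal} (hc : Measurable c) {K : ℝ} (hbdd : ∀ p, (K : EReal) ≤ c p)
    {lam : ℝ} (hK : K ≤ lam) (z : MeasureTheory.ProbabilityMeasure X) (a : A) :
    cbar c z a ≤ (lam : EReal) ↔
      (∫⁻ x, gfun c K (x, a) ∂(z : MeasureTheory.Measure X)) ≤ ENNReal.ofReal (lam - K) := by
  rw [cbar_eq hc hbdd]
  set I := ∫⁻ x, gfun c K (x, a) ∂(z : MeasureTheory.Measure X)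
  rcases eq_or_ne I ⊤ with hI | hI
  · rw [hI, EReal.coe_ennreal_top, EReal.coe_add_top]
    exact iff_of_false (by simp) (by simp [ENNReal.ofReal_ne_top])
  · rw [coe_ennreal_eq_coe_toReal hI, ← EReal.coe_add, EReal.coe_le_coe_iff,
      ENNReal.le_ofReal_iff_toReal_le hI (by linarith)]
    constructor <;> intro <;> linarith

end Aux2

section Portmanteau

open MeasureTheory Filter Topology Set
open scoped ENNReal

lemma le_tsum_step {w ε : ℝ≥0∞} (hε : ε ≠ 0) :
    w ≤ ∑' k : ℕ, (if (k : ℝ≥0∞) * ε < w then ε else 0) := by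
  classical
  by_cases hall : ∀ k : ℕ, (k : ℝ≥0∞) * ε < w
  · have : (∑' k : ℕ, (if (k : ℝ≥0∞) * ε < w then ε else 0)) = ∑' _ : ℕ, ε :=
      tsum_congr fun k => if_pos (hall k)
    rw [this, ENNReal.tsum_const_eq_top_of_ne_zero hε]
    exact le_top
  · push_neg at hall
    have hall' : ∃ k : ℕ, w ≤ (k : ℝ≥0∞) * ε := hall
    set N := Nat.find hall' with hN_def
    have hN : w ≤ (N : ℝ≥0∞) * ε := Nat.find_spec hall'
    have hlt : ∀ j < N, (j : ℝ≥0∞) * ε < w := fun j hj => not_le.1 (Nat.find_min hall' hj)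
    calc w ≤ (N : ℝ≥0∞) * ε := hN
      _ = ∑ _j ∈ Finset.range N, ε := by
          rw [Finset.sum_const, Finset.card_range, nsmul_eq_mul]
      _ = ∑ j ∈ Finset.range N, (if (j : ℝ≥0∞) * ε < w then ε else 0) :=
          (Finset.sum_congr rfl fun j hj => (if_pos (hlt j (Finset.mem_range.1 hj))).symm)
      _ ≤ ∑' k : ℕ, (if (k : ℝ≥0∞) * ε < w then ε else 0) := ENNReal.sum_le_tsum _

lemma tsum_step_le {w ε : ℝ≥0∞} :
    (∑' k : ℕ, (if ((k : ℝ≥0∞) + 1) * ε < w then ε else 0)) ≤ w := by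
  classical
  rw [ENNReal.tsum_eq_iSup_sum]
  apply iSup_le fun F => ?_
  rw [← Finset.sum_filter]
  set F' := F.filter (fun k : ℕ => ((k : ℝ≥0∞) + 1) * ε < w) with hF'
  rcases F'.eq_empty_or_nonempty with hF'e | hne
  · rw [hF'e]; simp
  · set kmax := F'.max' hne with hkm
    have hkw : ((kmax : ℝ≥0∞) + 1) * ε < w := (Finset.mem_filter.1 (F'.max'_mem hne)).2
    have hsub : F' ⊆ Finset.range (kmax + 1) := fun j hj =>
      Finset.mem_range.2 (Nat.lt_succ_of_le (F'.le_max' j hj))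
    calc (∑ _j ∈ F', ε) = (F'.card : ℝ≥0∞) * ε := by
          rw [Finset.sum_const, nsmul_eq_mul]
      _ ≤ ((kmax : ℝ≥0∞) + 1) * ε := by
          apply mul_le_mul_left
          have : (F'.card : ℝ≥0∞) ≤ ((kmax + 1 : ℕ) : ℝ≥0∞) := by
            exact_mod_cast Nat.cast_le.2 ((Finset.card_le_card hsub).trans_eq
              (Finset.card_range _))
          simpa using this
      _ ≤ w := hkw.le

variable {X : Type*} [MetricSpace X] [MeasurableSpace X] [BorelSpace X]

lemma lemP (z : ProbabilityMeasure X) (zs : ℕ → ProbabilityMeasure X)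
    (hz : Tendsto zs atTop (𝓝 z)) (f : X → ℝ≥0∞) (hf : Measurable f)
    (fs : ℕ → X → ℝ≥0∞) (hfs : ∀ m, Measurable (fs m))
    (H : ∀ x, ∀ t : ℝ≥0∞, t < f x → ∃ n, ∃ V ∈ 𝓝 x, ∀ m ≥ n, ∀ y ∈ V, t < fs m y) :
    (∫⁻ x, f x ∂(z : Measure X))
      ≤ atTop.liminf fun m => ∫⁻ x, fs m x ∂(zs m : Measure X) := by
  classical
  set L := atTop.liminf fun m => ∫⁻ x, fs m x ∂(zs m : Measure X) with hL
  -- Step 1 : for every t, the sublevel measures satisfy a liminf inequality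
  have step1 : ∀ t : ℝ≥0∞,
      (z : Measure X) {x | t < f x}
        ≤ atTop.liminf fun m => (zs m : Measure X) {x | t < fs m x} := by
    intro t
    set W : ℕ → Set X := fun n => ⋃₀ {V | IsOpen V ∧ ∀ m ≥ n, ∀ y ∈ V, t < fs m y} with hW
    have hWopen : ∀ n, IsOpen (W n) := fun n => isOpen_sUnion fun V hV => hV.1
    have hWmono : Monotone W := by
      intro n n' hnn'
      apply sUnion_mono
      intro V hV
      exact ⟨hV.1, fun m hm => hV.2 m (le_trans hnn' hm)⟩
    have hsub : {x | t < f x} ⊆ ⋃ n, W n := by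
      intro x hx
      obtain ⟨n, V, hV, hVP⟩ := H x t hx
      refine mem_iUnion.2 ⟨n, ⟨interior V,
        ⟨isOpen_interior, fun m hm y hy => hVP m hm y (interior_subset hy)⟩, ?_⟩⟩
      exact mem_interior_iff_mem_nhds.2 hV
    calc (z : Measure X) {x | t < f x} ≤ (z : Measure X) (⋃ n, W n) := measure_mono hsub
      _ = ⨆ n, (z : Measure X) (W n) := Directed.measure_iUnion (hWmono.directed_le)
      _ ≤ atTop.liminf fun m => (zs m : Measure X) {x | t < fs m x} := by
          apply iSup_le fun n => ?_
          refine le_trans (ProbabilityMeasure.le_liminf_measure_open_of_tendsto hz (hWopen n)) ?_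
          exact liminf_le_liminf (eventually_atTop.2 ⟨n, fun m hm =>
            measure_mono fun y hy => by
              obtain ⟨V, ⟨_, hVP⟩, hyV⟩ := hy
              exact hVP m hm y hyV⟩)
  -- auxiliary liminf lemmas
  have mulliminf : ∀ (ε : ℝ≥0∞) (u : ℕ → ℝ≥0∞),
      ε * atTop.liminf u ≤ atTop.liminf fun m => ε * u m := by
    intro ε u
    rw [liminf_eq_iSup_iInf_of_nat, liminf_eq_iSup_iInf_of_nat, ENNReal.mul_iSup]
    apply iSup_mono fun n => ?_
    exact le_iInf₂ fun m hm => mul_le_mul_right (iInf₂_le m hm) ε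
  have fatou_tsum : ∀ v : ℕ → ℕ → ℝ≥0∞,
      (∑' k, atTop.liminf fun m => v m k) ≤ atTop.liminf fun m => ∑' k, v m k := by
    intro v
    have := lintegral_liminf_le (μ := Measure.count) (u := atTop)
      (f := fun m (k : ℕ) => v m k) fun m => measurable_of_countable _
    rw [lintegral_count] at this
    refine le_trans (le_of_eq (tsum_congr fun k => rfl)) (this.trans ?_)
    exact liminf_le_liminf (Eventually.of_forall fun m => le_of_eq (lintegral_count _))
  -- Step 2 : conclude via step sums
  refine ENNReal.le_of_forall_pos_le_add fun ε hε _hL => ?_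
  have hε0 : ((ε : ℝ≥0∞)) ≠ 0 := by exact_mod_cast hε.ne'
  have measf : ∀ t : ℝ≥0∞, MeasurableSet {x | t < f x} := fun t =>
    measurableSet_lt measurable_const hf
  have measfs : ∀ m (t : ℝ≥0∞), MeasurableSet {x | t < fs m x} := fun m t =>
    measurableSet_lt measurable_const (hfs m)
  have upper : (∫⁻ x, f x ∂(z : Measure X))
      ≤ ∑' k : ℕ, (ε : ℝ≥0∞) * (z : Measure X) {x | (k : ℝ≥0∞) * ε < f x} := by
    calc (∫⁻ x, f x ∂(z : Measure X))
        ≤ ∫⁻ x, ∑' k : ℕ, (if (k : ℝ≥0∞) * ε < f x then (ε:ℝ≥0∞) else 0) ∂(z : Measure X) :=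
          lintegral_mono fun x => le_tsum_step hε0
      _ = ∑' k : ℕ, ∫⁻ x, (if (k : ℝ≥0∞) * ε < f x then (ε:ℝ≥0∞) else 0) ∂(z : Measure X) :=
          lintegral_tsum fun k => (Measurable.ite (measf _) measurable_const
            measurable_const).aemeasurable
      _ = ∑' k : ℕ, (ε : ℝ≥0∞) * (z : Measure X) {x | (k : ℝ≥0∞) * ε < f x} := by
          apply tsum_congr fun k => ?_
          rw [← lintegral_indicator_const (measf ((k : ℝ≥0∞) * ε)) (ε : ℝ≥0∞)]
          apply lintegral_congr fun x => ?_
          rw [Set.indicator_apply]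
          rfl
  have lower : ∀ m, (∑' k : ℕ,
        (ε : ℝ≥0∞) * (zs m : Measure X) {x | ((k : ℝ≥0∞) + 1) * ε < fs m x})
      ≤ ∫⁻ x, fs m x ∂(zs m : Measure X) := by
    intro m
    calc (∑' k : ℕ, (ε : ℝ≥0∞) * (zs m : Measure X) {x | ((k : ℝ≥0∞) + 1) * ε < fs m x})
        = ∑' k : ℕ, ∫⁻ x, (if ((k : ℝ≥0∞) + 1) * ε < fs m x then (ε:ℝ≥0∞) else 0)
            ∂(zs m : Measure X) := by
          apply tsum_congr fun k => ?_
          rw [← lintegral_indicator_const (measfs m (((k : ℝ≥0∞) + 1) * ε)) (ε : ℝ≥0∞)]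
          apply lintegral_congr fun x => ?_
          rw [Set.indicator_apply]
          rfl
      _ = ∫⁻ x, ∑' k : ℕ, (if ((k : ℝ≥0∞) + 1) * ε < fs m x then (ε:ℝ≥0∞) else 0)
            ∂(zs m : Measure X) :=
          (lintegral_tsum fun k => (Measurable.ite (measfs m _) measurable_const
            measurable_const).aemeasurable).symm
      _ ≤ ∫⁻ x, fs m x ∂(zs m : Measure X) := lintegral_mono fun x => tsum_step_le
  -- combine
  have main : (∫⁻ x, f x ∂(z : Measure X)) ≤ (ε : ℝ≥0∞) + L := by
    refine upper.trans ?_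
    rw [tsum_eq_zero_add' ENNReal.summable]
    apply add_le_add
    · calc (ε : ℝ≥0∞) * (z : Measure X) {x | ((0:ℕ) : ℝ≥0∞) * ε < f x}
          ≤ (ε : ℝ≥0∞) * 1 := by
            apply mul_le_mul_right
            exact prob_le_one
        _ = ε := mul_one _
    · calc (∑' k : ℕ, (ε : ℝ≥0∞) * (z : Measure X) {x | ((k : ℕ) + 1 : ℕ) * (ε:ℝ≥0∞) < f x})
          ≤ ∑' k : ℕ, atTop.liminf fun m =>
              (ε : ℝ≥0∞) * (zs m : Measure X) {x | ((k : ℝ≥0∞) + 1) * ε < fs m x} := by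
            apply ENNReal.tsum_le_tsum fun k => ?_
            have h1 := step1 (((k : ℝ≥0∞) + 1) * ε)
            have h2 := mul_le_mul_right h1 (ε : ℝ≥0∞)
            refine le_trans (le_of_eq ?_) (h2.trans (mulliminf _ _))
            norm_cast
        _ ≤ atTop.liminf fun m => ∑' k : ℕ,
              (ε : ℝ≥0∞) * (zs m : Measure X) {x | ((k : ℝ≥0∞) + 1) * ε < fs m x} :=
            fatou_tsum _
        _ ≤ L := liminf_le_liminf (Eventually.of_forall fun m => lower m)
  calc (∫⁻ x, f x ∂(z : Measure X)) ≤ (ε : ℝ≥0∞) + L := main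
    _ = L + ε := add_comm _ _

end Portmanteau

section Extraction

open MeasureTheory Filter Topology Set

lemma lemE {X A : Type*} [MetricSpace X] [MetricSpace A]
    {c : X × A → EReal} {K : ℝ} (hbdd : ∀ p, (K : EReal) ≤ c p) (hKinf : KInfCompact c)
    (b : ℕ → A) (x : X) (t : ℝ≥0∞) (ht : t ≠ ⊤)
    (hcon : ∀ n : ℕ, ∀ V ∈ 𝓝 x, ∃ m ≥ n, ∃ y ∈ V, gfun c K (y, b m) ≤ t) :
    ∃ abar : A, ∃ σ : ℕ → ℕ, StrictMono σ ∧ Tendsto (b ∘ σ) atTop (𝓝 abar)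
      ∧ gfun c K (x, abar) ≤ t := by
  have hball : ∀ n j : ℕ, ∃ q : ℕ × X, n < q.1 ∧ q.2 ∈ Metric.ball x (1/((j:ℝ)+1))
      ∧ gfun c K (q.2, b q.1) ≤ t := by
    intro n j
    obtain ⟨m, hm, y, hy, hgy⟩ := hcon (n+1) (Metric.ball x (1/((j:ℝ)+1)))
      (Metric.ball_mem_nhds x (by positivity))
    exact ⟨(m, y), Nat.lt_of_succ_le hm, hy, hgy⟩
  let F : ℕ → ℕ × X := fun j =>
    Nat.rec ((hball 0 0).choose) (fun j prev => (hball prev.1 (j+1)).choose) j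
  have hFs : ∀ j, F (j+1) = (hball (F j).1 (j+1)).choose := fun j => rfl
  have hprop : ∀ j : ℕ, (F j).2 ∈ Metric.ball x (1/((j:ℝ)+1))
      ∧ gfun c K ((F j).2, b (F j).1) ≤ t := by
    intro j
    cases j with
    | zero => exact ⟨(hball 0 0).choose_spec.2.1, (hball 0 0).choose_spec.2.2⟩
    | succ j =>
      have hs := (hball (F j).1 (j+1)).choose_spec
      rw [hFs j]
      exact ⟨hs.2.1, hs.2.2⟩
  have hmono : StrictMono fun j => (F j).1 :=
    strictMono_nat_of_lt_succ fun j => (hball (F j).1 (j+1)).choose_spec.1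
  have hxs : Tendsto (fun j => (F j).2) atTop (𝓝 x) := by
    rw [tendsto_iff_dist_tendsto_zero]
    exact squeeze_zero (fun j => dist_nonneg)
      (fun j => (Metric.mem_ball.1 (hprop j).1).le)
      tendsto_one_div_add_atTop_nhds_zero_nat
  have hC : IsCompact (insert x (Set.range fun j => (F j).2)) := hxs.isCompact_insert_range
  have hS := hKinf _ hC (K + t.toReal)
  have hqS : ∀ j, ((F j).2, b (F j).1) ∈
      {p : X × A | p.1 ∈ insert x (Set.range fun j => (F j).2)
        ∧ c p ≤ ((K + t.toReal : ℝ) : EReal)} := fun j =>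
    ⟨Set.mem_insert_of_mem _ ⟨j, rfl⟩, (gfun_le_iff hbdd _ ht).1 (hprop j).2⟩
  obtain ⟨⟨xbar, abar⟩, hmemS, ψ, hψ, hconv⟩ := hS.tendsto_subseq hqS
  have h1 : Tendsto (fun j => (F (ψ j)).2) atTop (𝓝 xbar) :=
    (continuous_fst.tendsto _).comp hconv
  have h2 : Tendsto (fun j => b ((F (ψ j)).1)) atTop (𝓝 abar) :=
    (continuous_snd.tendsto _).comp hconv
  have hxx : xbar = x := tendsto_nhds_unique h1 (hxs.comp hψ.tendsto_atTop)
  refine ⟨abar, (fun j => (F j).1) ∘ ψ, hmono.comp hψ, h2, ?_⟩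
  have hc2 := hmemS.2
  rw [hxx] at hc2
  exact (gfun_le_iff hbdd _ ht).2 hc2

end Extraction


/-- **Theorem (preservation of `K`-inf-compactness).**
If `c : X×A → ℝ ∪ {+∞}` is bounded below by a constant `K` and `K`-inf-compact on `X×A`,
then `c̄(z,a) = ∫_X c(x,a) z(dx)` is bounded below by the same constant and
`K`-inf-compact on `P(X)×A`. -/
theorem cbar_KInfCompact {X A : Type*}
    [MetricSpace X] [SecondCountableTopology X] [MeasurableSpace X] [BorelSpace X]
    [MetricSpace A] [SecondCountableTopology A] [MeasurableSpace A] [BorelSpace A]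
    (c : X × A → EReal) (hcmeas : Measurable c)
    (K : ℝ) (hbdd : ∀ p, (K : EReal) ≤ c p)
    (hKinf : KInfCompact c) :
    (∀ (z : ProbabilityMeasure X) (a : A), (K : EReal) ≤ cbar c z a) ∧
    KInfCompact (fun p : ProbabilityMeasure X × A => cbar c p.1 p.2) := by
  open MeasureTheory Filter Topology Set in
  constructor
  · exact fun z a => cbar_ge hcmeas hbdd z a
  · intro 𝒦 h𝒦 lam
    show IsCompact {p : ProbabilityMeasure X × A | p.1 ∈ 𝒦 ∧ cbar c p.1 p.2 ≤ (lam : EReal)}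
    by_cases hKlam : K ≤ lam
    swap
    · have hempty : {p : ProbabilityMeasure X × A | p.1 ∈ 𝒦 ∧ cbar c p.1 p.2 ≤ (lam : EReal)}
          = (∅ : Set (ProbabilityMeasure X × A)) := by
        ext p
        simp only [Set.mem_setOf_eq, Set.mem_empty_iff_false, iff_false, not_and]
        intro _ h2
        exact hKlam (EReal.coe_le_coe_iff.1 ((cbar_ge hcmeas hbdd p.1 p.2).trans h2))
      rw [hempty]
      exact isCompact_empty
    · set M := ENNReal.ofReal (lam - K) with hM
      have hMne : M ≠ ⊤ := ENNReal.ofReal_ne_top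
      letI : MetricSpace (ProbabilityMeasure X) :=
        TopologicalSpace.metrizableSpaceMetric _
      apply IsSeqCompact.isCompact
      intro p hp
      obtain ⟨z, hz𝒦, φ₁, hφ₁, hzconv⟩ :=
        h𝒦.tendsto_subseq (x := fun k => (p k).1) (fun k => (hp k).1)
      set zs : ℕ → ProbabilityMeasure X := fun k => (p (φ₁ k)).1 with hzs
      set b : ℕ → A := fun k => (p (φ₁ k)).2 with hbdef
      have hgm : ∀ a : A, Measurable fun x => gfun c K (x, a) := fun a =>
        (gfun_measurable hcmeas K).comp measurable_prodMk_right
      have hint : ∀ k, (∫⁻ x, gfun c K (x, b k) ∂(zs k : Measure X)) ≤ M := fun k =>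
        (cbar_le_iff hcmeas hbdd hKlam _ _).1 (hp (φ₁ k)).2
      by_cases hconv : ∃ a : A, ∃ φ₂ : ℕ → ℕ, StrictMono φ₂ ∧ Tendsto (b ∘ φ₂) atTop (𝓝 a)
      · obtain ⟨a, φ₂, hφ₂, hba⟩ := hconv
        have hzconv2 : Tendsto (fun k => zs (φ₂ k)) atTop (𝓝 z) :=
          hzconv.comp hφ₂.tendsto_atTop
        have H : ∀ x, ∀ t : ℝ≥0∞, t < gfun c K (x, a) →
            ∃ n, ∃ V ∈ 𝓝 x, ∀ m ≥ n, ∀ y ∈ V, t < gfun c K (y, b (φ₂ m)) := by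
          intro x t hta
          by_contra hcon
          push_neg at hcon
          obtain ⟨abar, σ, hσ, hbabar, hgabar⟩ :=
            lemE hbdd hKinf (fun m => b (φ₂ m)) x t hta.ne_top hcon
          have hsub : Tendsto ((fun m => b (φ₂ m)) ∘ σ) atTop (𝓝 a) :=
            hba.comp hσ.tendsto_atTop
          rw [tendsto_nhds_unique hbabar hsub] at hgabar
          exact absurd hgabar (not_le.2 hta)
        have key := lemP z (fun k => zs (φ₂ k)) hzconv2 (fun x => gfun c K (x, a)) (hgm a)
          (fun m x => gfun c K (x, b (φ₂ m))) (fun m => hgm _) H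
        have hle : (∫⁻ x, gfun c K (x, a) ∂(z : Measure X)) ≤ M := by
          refine key.trans ?_
          calc atTop.liminf (fun m => ∫⁻ x, gfun c K (x, b (φ₂ m)) ∂(zs (φ₂ m) : Measure X))
              ≤ atTop.liminf (fun _ => M) :=
                liminf_le_liminf (Eventually.of_forall fun m => hint (φ₂ m))
            _ = M := liminf_const M
        refine ⟨(z, a), ⟨hz𝒦, (cbar_le_iff hcmeas hbdd hKlam z a).2 hle⟩,
          φ₁ ∘ φ₂, hφ₁.comp hφ₂, ?_⟩
        exact hzconv2.prodMk_nhds hba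
      · push_neg at hconv
        exfalso
        have H : ∀ x, ∀ t : ℝ≥0∞, t < (⊤ : ℝ≥0∞) →
            ∃ n, ∃ V ∈ 𝓝 x, ∀ m ≥ n, ∀ y ∈ V, t < gfun c K (y, b m) := by
          intro x t ht
          by_contra hcon
          push_neg at hcon
          obtain ⟨abar, σ, hσ, hbabar, -⟩ := lemE hbdd hKinf b x t ht.ne hcon
          exact hconv abar σ hσ hbabar
        have key := lemP z zs hzconv (fun _ => (⊤ : ℝ≥0∞)) measurable_const
          (fun m x => gfun c K (x, b m)) (fun m => hgm _) H
        have htop : (⊤ : ℝ≥0∞) ≤ M := by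
          refine le_trans ?_ (key.trans ?_)
          · rw [lintegral_const]
            simp
          · calc atTop.liminf (fun m => ∫⁻ x, gfun c K (x, b m) ∂(zs m : Measure X))
                ≤ atTop.liminf (fun _ => M) :=
                  liminf_le_liminf (Eventually.of_forall fun m => hint m)
              _ = M := liminf_const M
        exact hMne (top_le_iff.1 htop)
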